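/- Let 0 < s < 2. The integral I_s := ∫₀^∞ τ^{−1−s/2} (1 − Θ(1,τ)) dτ is finite and strictly positive, and for every a > 0: ∫₀^∞ t^{−1−s/2} (1 − Θ(a,t)) dt = I_s · a^{−s}. (In particular, in the half space the fractional Dirichlet Laplacian applied to the constant 1 equals a constant multiple of d(x)^{−s} = x_d^{−s}.) -/

import Mathlib

open MeasureTheory Real Set

/-- `Θ(a,t) = (2π)^{−1/2} ∫_{−a/√(2t)}^{a/√(2t)} e^{−ξ²/2} dξ`: the half-space Dirichlet heat
semigroup applied to the constant function `1`, at a point at distance `a` from the boundary. -/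
noncomputable def Theta (a t : ℝ) : ℝ :=
  (2 * π) ^ (-(1 : ℝ) / 2) *
    ∫ ξ in (-(a / Real.sqrt (2 * t)))..(a / Real.sqrt (2 * t)), Real.exp (-ξ ^ 2 / 2)

namespace Stmt12Aux

/-- The Gaussian tail. -/
noncomputable def gtail (x : ℝ) : ℝ := ∫ ξ in Ioi x, Real.exp (-ξ ^ 2 / 2)

lemma expForm : (fun ξ : ℝ => Real.exp (-ξ ^ 2 / 2)) = fun ξ => Real.exp (-(1/2) * ξ ^ 2) := by
  funext ξ; congr 1; ring

lemma intExp : Integrable (fun ξ : ℝ => Real.exp (-ξ ^ 2 / 2)) := by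
  rw [expForm]; exact integrable_exp_neg_mul_sq (by norm_num)

lemma totalExp : (∫ ξ : ℝ, Real.exp (-ξ ^ 2 / 2)) = Real.sqrt (2 * π) := by
  rw [expForm, integral_gaussian]
  congr 1; ring

lemma intMulExp : Integrable (fun ξ : ℝ => ξ * Real.exp (-ξ ^ 2 / 2)) := by
  have h := integrable_mul_exp_neg_mul_sq (show (0:ℝ) < 1/2 by norm_num)
  have : (fun ξ : ℝ => ξ * Real.exp (-ξ ^ 2 / 2))
      = fun ξ : ℝ => ξ * Real.exp (-(1/2) * ξ ^ 2) := by
    funext ξ; congr 2; ring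
  rw [this]; exact h

lemma gtail_pos (x : ℝ) : 0 < gtail x := by
  rw [gtail, setIntegral_pos_iff_support_of_nonneg_ae]
  · have hs : Function.support (fun ξ : ℝ => Real.exp (-ξ ^ 2 / 2)) = Set.univ := by
      ext ξ; simp [Function.mem_support, Real.exp_ne_zero]
    rw [hs, Set.univ_inter, Real.volume_Ioi]
    exact ENNReal.zero_lt_top
  · filter_upwards with ξ using (Real.exp_pos _).le
  · exact intExp.integrableOn

lemma integral_xi (x : ℝ) :
    (∫ ξ in Ioi x, ξ * Real.exp (-ξ ^ 2 / 2)) = Real.exp (-x ^ 2 / 2) := by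
  have hderiv : ∀ ξ ∈ Ici x,
      HasDerivAt (fun u : ℝ => -Real.exp (-u ^ 2 / 2)) (ξ * Real.exp (-ξ ^ 2 / 2)) ξ := by
    intro ξ _
    have h1 : HasDerivAt (fun u : ℝ => -u ^ 2 / 2) (-ξ) ξ := by
      have := ((hasDerivAt_pow 2 ξ).neg).div_const 2
      refine HasDerivAt.congr_deriv this ?_
      simp; ring
    have h2 := (h1.exp).neg
    refine HasDerivAt.congr_deriv h2 ?_
    ring
  have htend : Filter.Tendsto (fun u : ℝ => -Real.exp (-u ^ 2 / 2)) Filter.atTop (nhds 0) := by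
    have h3 : Filter.Tendsto (fun u : ℝ => u ^ 2 / 2) Filter.atTop Filter.atTop :=
      (Filter.tendsto_pow_atTop two_ne_zero).atTop_div_const (by norm_num)
    have h4 : Filter.Tendsto (fun u : ℝ => -u ^ 2 / 2) Filter.atTop Filter.atBot := by
      have : Filter.Tendsto (fun u : ℝ => -(u ^ 2 / 2)) Filter.atTop Filter.atBot :=
        Filter.tendsto_neg_atBot_iff.mpr h3
      simpa [neg_div] using this
    have h5 := Real.tendsto_exp_atBot.comp h4
    have := h5.neg
    simpa [Function.comp] using this
  have := integral_Ioi_of_hasDerivAt_of_tendsto' hderiv intMulExp.integrableOn htend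
  rw [this]; ring

lemma gtail_le {x : ℝ} (hx : 0 < x) : gtail x ≤ Real.exp (-x ^ 2 / 2) / x := by
  have hint : IntegrableOn (fun ξ : ℝ => ξ / x * Real.exp (-ξ ^ 2 / 2)) (Ioi x) := by
    have h := (intMulExp.integrableOn (s := Ioi x)).div_const x
    apply MeasureTheory.IntegrableOn.congr_fun h _ measurableSet_Ioi
    intro ξ _; ring
  have hmono : gtail x ≤ ∫ ξ in Ioi x, ξ / x * Real.exp (-ξ ^ 2 / 2) := by
    apply setIntegral_mono_on intExp.integrableOn hint measurableSet_Ioi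
    intro ξ hξ
    have h1 : (1:ℝ) ≤ ξ / x := (one_le_div hx).2 (le_of_lt hξ)
    nlinarith [Real.exp_pos (-ξ ^ 2 / 2)]
  have heq : (∫ ξ in Ioi x, ξ / x * Real.exp (-ξ ^ 2 / 2)) = Real.exp (-x ^ 2 / 2) / x := by
    have : (fun ξ : ℝ => ξ / x * Real.exp (-ξ ^ 2 / 2))
        = fun ξ : ℝ => (ξ * Real.exp (-ξ ^ 2 / 2)) / x := by
      funext ξ; ring
    rw [this, integral_div, integral_xi]
  linarith [hmono, heq.le, heq.ge]

lemma tail_eq {x : ℝ} (hx : 0 ≤ x) :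
    Real.sqrt (2 * π) - (∫ ξ in (-x)..x, Real.exp (-ξ ^ 2 / 2)) = 2 * gtail x := by
  have hIoc : (∫ ξ in (-x)..x, Real.exp (-ξ ^ 2 / 2))
      = ∫ ξ in Ioc (-x) x, Real.exp (-ξ ^ 2 / 2) :=
    intervalIntegral.integral_of_le (by linarith)
  have hsym : (∫ ξ in Iic (-x), Real.exp (-ξ ^ 2 / 2)) = gtail x := by
    rw [gtail, ← integral_comp_neg_Ioi]
    congr 1; funext ξ; rw [neg_sq]
  have hsplit1 : (∫ ξ in Ioi (-x), Real.exp (-ξ ^ 2 / 2))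
      = (∫ ξ in Ioc (-x) x, Real.exp (-ξ ^ 2 / 2)) + gtail x := by
    rw [gtail, ← setIntegral_union (Ioc_disjoint_Ioi le_rfl) measurableSet_Ioi
      intExp.integrableOn intExp.integrableOn, Ioc_union_Ioi_eq_Ioi (by linarith)]
  have hsplit2 : (∫ ξ in Iic (-x), Real.exp (-ξ ^ 2 / 2))
      + (∫ ξ in Ioi (-x), Real.exp (-ξ ^ 2 / 2)) = Real.sqrt (2 * π) := by
    rw [intervalIntegral.integral_Iic_add_Ioi intExp.integrableOn intExp.integrableOn, totalExp]
  rw [hIoc]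
  linarith [hsym, hsplit1, hsplit2]

lemma c_pos : 0 < (2 * π) ^ (-(1:ℝ) / 2) :=
  Real.rpow_pos_of_pos (by positivity) _

lemma c_mul_sqrt : (2 * π) ^ (-(1:ℝ) / 2) * Real.sqrt (2 * π) = 1 := by
  rw [Real.sqrt_eq_rpow, ← Real.rpow_add (by positivity)]
  norm_num

lemma oneSubTheta {a t : ℝ} (ha : 0 < a) (ht : 0 < t) :
    1 - Theta a t = 2 * (2 * π) ^ (-(1:ℝ) / 2) * gtail (a / Real.sqrt (2 * t)) := by
  have hx : (0:ℝ) ≤ a / Real.sqrt (2 * t) := by positivity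
  have h := tail_eq hx
  rw [Theta]
  nlinarith [c_mul_sqrt, c_pos]

lemma oneSubTheta_pos {a t : ℝ} (ha : 0 < a) (ht : 0 < t) : 0 < 1 - Theta a t := by
  rw [oneSubTheta ha ht]
  exact mul_pos (mul_pos two_pos c_pos) (gtail_pos _)

lemma theta_nonneg {a t : ℝ} (ha : 0 < a) : 0 ≤ Theta a t := by
  rw [Theta]
  apply mul_nonneg c_pos.le
  have hx : (0:ℝ) ≤ a / Real.sqrt (2 * t) := by positivity
  apply intervalIntegral.integral_nonneg (by linarith)
  intro u _; positivity

lemma cont_g : Continuous fun x : ℝ => ∫ ξ in (-x)..x, Real.exp (-ξ ^ 2 / 2) := by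
  have hint : ∀ a b : ℝ, IntervalIntegrable (fun ξ : ℝ => Real.exp (-ξ ^ 2 / 2)) volume a b :=
    fun a b => intExp.intervalIntegrable
  have hp := intervalIntegral.continuous_primitive hint 0
  have heq : (fun x : ℝ => ∫ ξ in (-x)..x, Real.exp (-ξ ^ 2 / 2))
      = fun x : ℝ => (∫ ξ in (0:ℝ)..x, Real.exp (-ξ ^ 2 / 2))
        - ∫ ξ in (0:ℝ)..(-x), Real.exp (-ξ ^ 2 / 2) := by
    funext x
    rw [← intervalIntegral.integral_add_adjacent_intervals (hint (-x) 0) (hint 0 x),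
      intervalIntegral.integral_symm]
    ring
  rw [heq]
  exact hp.sub (hp.comp continuous_neg)

lemma meas_theta (a : ℝ) : Measurable fun t : ℝ => Theta a t := by
  have h1 : Measurable fun t : ℝ => a / Real.sqrt (2 * t) :=
    (measurable_const.div ((Real.continuous_sqrt.measurable).comp
      (measurable_const_mul 2)))
  exact (cont_g.measurable.comp h1).const_mul _

lemma meas_f (a p : ℝ) : Measurable fun t : ℝ => t ^ p * (1 - Theta a t) := by
  have h1 : Measurable fun t : ℝ => t ^ p := by fun_prop
  exact h1.mul (measurable_const.sub (meas_theta a))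

end Stmt12Aux

open Stmt12Aux

/-- For `0 < s < 2`, the integral `I_s = ∫₀^∞ τ^{−1−s/2}(1 − Θ(1,τ)) dτ` is
finite and strictly positive, and for every `a > 0`:
`∫₀^∞ t^{−1−s/2}(1 − Θ(a,t)) dt = I_s · a^{−s}`. -/
theorem stmt_12 (s : ℝ) (hs0 : 0 < s) (hs2 : s < 2) :
    MeasureTheory.IntegrableOn
      (fun τ : ℝ => τ ^ (-1 - s / 2) * (1 - Theta 1 τ)) (Set.Ioi 0) ∧
    0 < (∫ τ in Set.Ioi (0 : ℝ), τ ^ (-1 - s / 2) * (1 - Theta 1 τ)) ∧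
    ∀ a : ℝ, 0 < a →
      (∫ t in Set.Ioi (0 : ℝ), t ^ (-1 - s / 2) * (1 - Theta a t)) =
        (∫ τ in Set.Ioi (0 : ℝ), τ ^ (-1 - s / 2) * (1 - Theta 1 τ)) * a ^ (-s) := by
  set p : ℝ := -1 - s / 2 with hp
  set F : ℝ → ℝ := fun τ => τ ^ p * (1 - Theta 1 τ) with hF
  -- bound on (0,1]
  have hbound : ∀ τ ∈ Ioc (0:ℝ) 1, F τ ≤ 128 := by
    intro τ hτ
    obtain ⟨hτ0, hτ1⟩ := hτ
    set x : ℝ := 1 / Real.sqrt (2 * τ) with hxdef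
    have hsq : Real.sqrt (2 * τ) > 0 := Real.sqrt_pos.2 (by linarith)
    have hx0 : 0 < x := by positivity
    have hxsq : x ^ 2 = 1 / (2 * τ) := by
      rw [hxdef, div_pow, one_pow, Real.sq_sqrt (by linarith : (0:ℝ) ≤ 2 * τ)]
    have hxinv : x⁻¹ = Real.sqrt (2 * τ) := by
      rw [hxdef]; field_simp
    have hxinv_le : x⁻¹ ≤ 2 := by
      rw [hxinv]
      calc Real.sqrt (2 * τ) ≤ Real.sqrt 4 := Real.sqrt_le_sqrt (by linarith)
        _ = 2 := by
            rw [show (4:ℝ) = 2 ^ 2 by norm_num, Real.sqrt_sq (by norm_num)]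
    -- exp bound
    have hu : (0:ℝ) ≤ 1 / (4 * τ) := by positivity
    have hexp : Real.exp (-x ^ 2 / 2) ≤ 32 * τ ^ 2 := by
      have hq := Real.quadratic_le_exp_of_nonneg hu
      have he : Real.exp (-x ^ 2 / 2) = (Real.exp (1 / (4 * τ)))⁻¹ := by
        rw [← Real.exp_neg]; congr 1; rw [hxsq]; field_simp; ring
      rw [he]
      rw [inv_le_comm₀ (Real.exp_pos _) (by positivity)]
      have hrw : (32 * τ ^ 2)⁻¹ = (1 / (4 * τ)) ^ 2 / 2 := by
        field_simp; ring
      rw [hrw]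
      nlinarith [hq, hu]
    have hc1 : (2 * π) ^ (-(1:ℝ) / 2) ≤ 1 :=
      Real.rpow_le_one_of_one_le_of_nonpos (by nlinarith [Real.pi_gt_three]) (by norm_num)
    have h1 : 1 - Theta 1 τ ≤ 128 * τ ^ 2 := by
      rw [oneSubTheta one_pos hτ0]
      have hg := gtail_le hx0
      have : gtail x ≤ Real.exp (-x ^ 2 / 2) * x⁻¹ := by
        rw [div_eq_mul_inv] at hg; exact hg
      have hgt : gtail x ≤ 64 * τ ^ 2 := by
        calc gtail x ≤ Real.exp (-x ^ 2 / 2) * x⁻¹ := this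
          _ ≤ (32 * τ ^ 2) * 2 := by
              apply mul_le_mul hexp hxinv_le (by positivity) (by positivity)
          _ = 64 * τ ^ 2 := by ring
      calc 2 * (2 * π) ^ (-(1:ℝ) / 2) * gtail x ≤ 2 * 1 * (64 * τ ^ 2) := by
            apply mul_le_mul _ hgt (gtail_pos x).le (by norm_num)
            nlinarith [c_pos]
        _ = 128 * τ ^ 2 := by ring
    have h2 : τ ^ p ≤ (τ ^ 2)⁻¹ := by
      have : τ ^ p ≤ τ ^ (-2 : ℝ) :=
        Real.rpow_le_rpow_of_exponent_ge hτ0 hτ1 (by rw [hp]; linarith)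
      rw [Real.rpow_neg hτ0.le, show ((2:ℝ)) = ((2:ℕ):ℝ) by norm_num,
        Real.rpow_natCast] at this
      exact this
    have hΘpos := oneSubTheta_pos one_pos hτ0
    calc F τ = τ ^ p * (1 - Theta 1 τ) := rfl
      _ ≤ (τ ^ 2)⁻¹ * (128 * τ ^ 2) := by
          apply mul_le_mul h2 h1 hΘpos.le (by positivity)
      _ = 128 := by field_simp
  have hF_nonneg : ∀ τ ∈ Ioi (0:ℝ), 0 ≤ F τ := by
    intro τ hτ
    have := oneSubTheta_pos one_pos hτ
    have : (0:ℝ) < τ ^ p := Real.rpow_pos_of_pos hτ _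
    positivity
  have hFmeas : Measurable F := meas_f 1 p
  -- integrability
  have hint1 : IntegrableOn F (Ioc 0 1) := by
    apply Measure.integrableOn_of_bounded (M := 128) (by simp)
      hFmeas.aestronglyMeasurable
    rw [ae_restrict_iff' measurableSet_Ioc]
    filter_upwards with τ hτ
    rw [Real.norm_eq_abs, abs_le]
    constructor
    · have := hF_nonneg τ hτ.1; linarith
    · exact hbound τ hτ
  have hint2 : IntegrableOn F (Ioi 1) := by
    have hg : IntegrableOn (fun τ : ℝ => τ ^ p) (Ioi 1) :=
      integrableOn_Ioi_rpow_of_lt (by rw [hp]; linarith) one_pos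
    apply Integrable.mono' hg hFmeas.aestronglyMeasurable.restrict
    rw [ae_restrict_iff' measurableSet_Ioi]
    filter_upwards with τ hτ
    have hτ0 : (0:ℝ) < τ := lt_trans one_pos hτ
    have hpos : 0 < 1 - Theta 1 τ := oneSubTheta_pos one_pos hτ0
    have hle : 1 - Theta 1 τ ≤ 1 := by
      have := theta_nonneg (t := τ) one_pos; linarith
    have hrp : (0:ℝ) < τ ^ p := Real.rpow_pos_of_pos hτ0 _
    have hFeq : F τ = τ ^ p * (1 - Theta 1 τ) := rfl
    rw [Real.norm_eq_abs, hFeq, abs_of_nonneg (by positivity)]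
    nlinarith
  have hint : IntegrableOn F (Ioi 0) := by
    rw [← Ioc_union_Ioi_eq_Ioi (by norm_num : (0:ℝ) ≤ 1)]
    exact hint1.union hint2
  refine ⟨hint, ?_, ?_⟩
  · -- positivity
    rw [setIntegral_pos_iff_support_of_nonneg_ae _ hint]
    · have hsub : Ioi (0:ℝ) ⊆ Function.support F ∩ Ioi 0 := by
        intro τ hτ
        refine ⟨?_, hτ⟩
        have h1 : (0:ℝ) < τ ^ p := Real.rpow_pos_of_pos hτ _
        have h2 := oneSubTheta_pos one_pos hτ
        exact ne_of_gt (show (0:ℝ) < F τ from mul_pos h1 h2)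
      calc (0:ENNReal) < volume (Ioi (0:ℝ)) := by
            rw [Real.volume_Ioi]; exact ENNReal.zero_lt_top
        _ ≤ volume (Function.support F ∩ Ioi 0) := measure_mono hsub
    · filter_upwards [ae_restrict_mem measurableSet_Ioi] with τ hτ using hF_nonneg τ hτ
  · -- scaling
    intro a ha
    have hb : (0:ℝ) < a ^ (-2 : ℝ) := Real.rpow_pos_of_pos ha _
    have hcomp := integral_comp_mul_left_Ioi F 0 hb
    rw [mul_zero] at hcomp
    have hkey : ∀ t ∈ Ioi (0:ℝ),
        F (a ^ (-2:ℝ) * t) = a ^ (2 + s) * (t ^ p * (1 - Theta a t)) := by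
      intro t ht
      have ht0 : (0:ℝ) < t := ht
      have hth : Theta 1 (a ^ (-2:ℝ) * t) = Theta a t := by
        have hs2t : Real.sqrt (2 * (a ^ (-2:ℝ) * t)) = a⁻¹ * Real.sqrt (2 * t) := by
          have : 2 * (a ^ (-2:ℝ) * t) = (a⁻¹) ^ 2 * (2 * t) := by
            rw [show a ^ (-2:ℝ) = (a ^ (2:ℝ))⁻¹ by rw [← Real.rpow_neg ha.le],
              show a ^ (2:ℝ) = a ^ 2 by rw [show ((2:ℝ)) = ((2:ℕ):ℝ) by norm_num,
                Real.rpow_natCast]]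
            field_simp
            try ring
          rw [this, Real.sqrt_mul (by positivity), Real.sqrt_sq (by positivity)]
        rw [Theta, Theta, hs2t]
        have hne : Real.sqrt (2 * t) ≠ 0 := ne_of_gt (Real.sqrt_pos.2 (by linarith))
        congr 2 <;> (field_simp)
      have hrp : (a ^ (-2:ℝ) * t) ^ p = a ^ (2 + s) * t ^ p := by
        rw [Real.mul_rpow hb.le ht0.le, ← Real.rpow_mul ha.le]
        congr 2
        rw [hp]; ring
      show (a ^ (-2:ℝ) * t) ^ p * (1 - Theta 1 (a ^ (-2:ℝ) * t))
          = a ^ (2 + s) * (t ^ p * (1 - Theta a t))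
      rw [hth, hrp]; ring
    have hG : (∫ t in Ioi (0:ℝ), F (a ^ (-2:ℝ) * t))
        = a ^ (2 + s) * ∫ t in Ioi (0:ℝ), t ^ p * (1 - Theta a t) := by
      rw [setIntegral_congr_fun measurableSet_Ioi hkey, integral_const_mul]
    have heq : a ^ (2 + s) * (∫ t in Ioi (0:ℝ), t ^ p * (1 - Theta a t))
        = a ^ (2:ℝ) * ∫ τ in Ioi (0:ℝ), F τ := by
      rw [← hG, hcomp, smul_eq_mul, ← Real.rpow_neg ha.le]
      norm_num
    have hJ : (∫ t in Ioi (0:ℝ), t ^ p * (1 - Theta a t))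
        = a ^ (-(2 + s)) * (a ^ (2:ℝ) * ∫ τ in Ioi (0:ℝ), F τ) := by
      rw [← heq, ← mul_assoc, ← Real.rpow_add ha,
        show -(2 + s) + (2 + s) = (0:ℝ) by ring, Real.rpow_zero, one_mul]
    rw [hJ, ← mul_assoc, ← Real.rpow_add ha,
      (show -(2 + s) + (2:ℝ) = -s by ring), mul_comm]
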